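/- Let M_k be the free monoid on generators e₁,…,e_k and let M_{k-1} be the submonoid generated by e₁,…,e_{k-1}. If p is a finitely supported function on M_{k-1}, then for every finitely supported q on M_k, ‖(p · δ_{e_k}) * q‖₂ = ‖p‖₂ ‖q‖₂; in particular the operator norm of left convolution by p * δ_{e_k} on ℓ²(M_k) equals ‖p‖₂. -/

import Mathlib

private lemma list_sep_inj {α : Type*} (e : α) : ∀ (a : List α), ∀ a' b b' : List α,
    e ∉ a → e ∉ a' → a ++ e :: b = a' ++ e :: b' → a = a' ∧ b = b' := by
  intro a
  induction a with
  | nil =>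
    intro a' b b' _ ha' h
    cases a' with
    | nil => simpa using h
    | cons x t =>
      simp only [List.nil_append, List.cons_append, List.cons.injEq] at h
      exact absurd (h.1 ▸ List.mem_cons_self) ha'
  | cons x t ih =>
    intro a' b b' ha ha' h
    cases a' with
    | nil =>
      simp only [List.nil_append, List.cons_append, List.cons.injEq] at h
      exact absurd (h.1 ▸ List.mem_cons_self) ha
    | cons x' t' =>
      simp only [List.cons_append, List.cons.injEq] at h
      obtain ⟨h1, h2⟩ := ih t' b b' (fun hm => ha (List.mem_cons_of_mem _ hm))
        (fun hm => ha' (List.mem_cons_of_mem _ hm)) h.2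
      exact ⟨by rw [h.1, h1], h2⟩

private lemma fm_sep_inj {k : ℕ} {x x' y y' : FreeMonoid (Fin (k+1))}
    (hx : Fin.last k ∉ x.toList) (hx' : Fin.last k ∉ x'.toList)
    (h : x * FreeMonoid.of (Fin.last k) * y = x' * FreeMonoid.of (Fin.last k) * y') :
    x = x' ∧ y = y' := by
  have h' : x.toList ++ (Fin.last k) :: y.toList = x'.toList ++ (Fin.last k) :: y'.toList := by
    have := congrArg FreeMonoid.toList h
    simpa [FreeMonoid.toList_mul, FreeMonoid.toList_of] using this
  obtain ⟨h1, h2⟩ := list_sep_inj (Fin.last k) x.toList x'.toList y.toList y'.toList hx hx' h'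
  exact ⟨FreeMonoid.toList.injective h1, FreeMonoid.toList.injective h2⟩

/-- The ℓ² norm of a finitely supported function on the free monoid. -/
noncomputable def l2norm {k : ℕ} (p : MonoidAlgebra ℂ (FreeMonoid (Fin k))) : ℝ :=
  Real.sqrt (∑ x ∈ p.coeff.support, ‖p.coeff x‖ ^ 2)

private lemma l2sq_eq_sum_superset {k : ℕ} (p : MonoidAlgebra ℂ (FreeMonoid (Fin k)))
    {S : Finset (FreeMonoid (Fin k))} (hS : p.coeff.support ⊆ S) :
    ∑ x ∈ p.coeff.support, ‖p.coeff x‖ ^ 2 = ∑ x ∈ S, ‖p.coeff x‖ ^ 2 := by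
  refine Finset.sum_subset hS fun x _ hx => ?_
  rw [Finsupp.notMem_support_iff.mp hx]
  simp

private lemma l2norm_nonneg {k : ℕ} (p : MonoidAlgebra ℂ (FreeMonoid (Fin k))) :
    0 ≤ l2norm p := Real.sqrt_nonneg _

private lemma l2norm_one {k : ℕ} :
    l2norm (MonoidAlgebra.single (1 : FreeMonoid (Fin k)) (1 : ℂ)) = 1 := by
  rw [l2norm, MonoidAlgebra.coeff_single, Finsupp.support_single_ne_zero _ one_ne_zero]
  simp

/-- Let `M_{k+1}` be the free monoid on generators `e₀, …, e_k` and let `p` be supported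
on the submonoid `M_k` of words avoiding the last generator `e_k`. Then for every finitely
supported `q`, `‖(p · δ_{e_k}) * q‖₂ = ‖p‖₂ ‖q‖₂`; in particular the operator norm of left
convolution by `p * δ_{e_k}` on `ℓ²(M_{k+1})` equals `‖p‖₂`. -/
theorem convolution_norm_mul_last_generator {k : ℕ}
    (p : MonoidAlgebra ℂ (FreeMonoid (Fin (k + 1))))
    (hp : ∀ x ∈ p.coeff.support, Fin.last k ∉ x.toList) :
    (∀ q : MonoidAlgebra ℂ (FreeMonoid (Fin (k + 1))),
      l2norm ((p * MonoidAlgebra.single (FreeMonoid.of (Fin.last k)) 1) * q)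
        = l2norm p * l2norm q) ∧
    IsGreatest {r : ℝ | ∃ q : MonoidAlgebra ℂ (FreeMonoid (Fin (k + 1))),
      l2norm q ≤ 1 ∧
        r = l2norm ((p * MonoidAlgebra.single (FreeMonoid.of (Fin.last k)) 1) * q)}
      (l2norm p) := by
  classical
  have main : ∀ q : MonoidAlgebra ℂ (FreeMonoid (Fin (k + 1))),
      l2norm ((p * MonoidAlgebra.single (FreeMonoid.of (Fin.last k)) 1) * q)
        = l2norm p * l2norm q := by
    intro q
    set e := FreeMonoid.of (Fin.last k) with he
    have hinj : ∀ xy ∈ p.coeff.support ×ˢ q.coeff.support, ∀ xy' ∈ p.coeff.support ×ˢ q.coeff.support,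
        xy.1 * e * xy.2 = xy'.1 * e * xy'.2 → xy = xy' := by
      intro xy hxy xy' hxy' h
      obtain ⟨h1, h2⟩ := fm_sep_inj (hp _ (Finset.mem_product.mp hxy).1)
        (hp _ (Finset.mem_product.mp hxy').1) h
      exact Prod.ext h1 h2
    have hexp : p * MonoidAlgebra.single e 1 * q
        = ∑ xy ∈ p.coeff.support ×ˢ q.coeff.support,
            MonoidAlgebra.single (xy.1 * e * xy.2) (p.coeff xy.1 * q.coeff xy.2) := by
      conv_lhs => rw [← MonoidAlgebra.sum_coeff_single p, ← MonoidAlgebra.sum_coeff_single q, Finsupp.sum, Finsupp.sum]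
      rw [Finset.sum_mul, Finset.sum_mul, Finset.sum_product]
      refine Finset.sum_congr rfl fun x hx => ?_
      rw [Finset.mul_sum]
      refine Finset.sum_congr rfl fun y hy => ?_
      rw [MonoidAlgebra.single_mul_single, MonoidAlgebra.single_mul_single, mul_one]
    set P := p * MonoidAlgebra.single e 1 * q with hP
    set S : Finset (FreeMonoid (Fin (k+1))) :=
      (p.coeff.support ×ˢ q.coeff.support).image (fun xy => xy.1 * e * xy.2) with hSdef
    have happly : ∀ z, P.coeff z = ∑ xy ∈ p.coeff.support ×ˢ q.coeff.support,
        if xy.1 * e * xy.2 = z then p.coeff xy.1 * q.coeff xy.2 else 0 := by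
      intro z
      rw [hexp, MonoidAlgebra.coeff_sum, Finsupp.finset_sum_apply]
      exact Finset.sum_congr rfl fun xy _ => by rw [MonoidAlgebra.coeff_single]; exact Finsupp.single_apply
    have hsupp : P.coeff.support ⊆ S := by
      intro z hz
      by_contra hzS
      apply Finsupp.mem_support_iff.mp hz
      rw [happly]
      refine Finset.sum_eq_zero fun xy hxy => ?_
      rw [if_neg]
      intro hc
      exact hzS (Finset.mem_image.mpr ⟨xy, hxy, hc⟩)
    have hval : ∀ xy ∈ p.coeff.support ×ˢ q.coeff.support, P.coeff (xy.1 * e * xy.2) = p.coeff xy.1 * q.coeff xy.2 := by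
      intro xy hxy
      rw [happly, Finset.sum_eq_single_of_mem xy hxy]
      · rw [if_pos rfl]
      · intro xy' hxy' hne
        rw [if_neg fun hc => hne (hinj xy' hxy' xy hxy hc)]
    have key : ∑ z ∈ P.coeff.support, ‖P.coeff z‖ ^ 2
        = (∑ x ∈ p.coeff.support, ‖p.coeff x‖ ^ 2) * (∑ y ∈ q.coeff.support, ‖q.coeff y‖ ^ 2) := by
      rw [l2sq_eq_sum_superset P hsupp, hSdef,
        Finset.sum_image (fun x hx y hy h => hinj x hx y hy h),
        Finset.sum_congr rfl (fun xy hxy => by rw [hval xy hxy]),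
        Finset.sum_mul_sum, Finset.sum_product]
      exact Finset.sum_congr rfl fun x _ => Finset.sum_congr rfl fun y _ => by
        rw [norm_mul, mul_pow]
    rw [l2norm, l2norm, l2norm, key, Real.sqrt_mul (by positivity)]
  refine ⟨main, ?_, ?_⟩
  · refine ⟨MonoidAlgebra.single 1 1, le_of_eq l2norm_one, ?_⟩
    rw [main, l2norm_one, mul_one]
  · rintro r ⟨q, hq, rfl⟩
    rw [main]
    calc l2norm p * l2norm q ≤ l2norm p * 1 :=
          mul_le_mul_of_nonneg_left hq (l2norm_nonneg p)
      _ = l2norm p := mul_one _
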